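/- Let f : ℕ → ℝ_{>0} with i·f(i)/f(i+1) → α for some real α > 0. Then ((f(i+1) − f(i))/f(i+1))^i → e^(−α) as i → ∞. -/

import Mathlib

open Filter Real Topology

theorem stmt13 (f : ℕ → ℝ) (α : ℝ) (hα : 0 < α) (hpos : ∀ i, 0 < f i)
    (hlim : Filter.Tendsto (fun i : ℕ => (i : ℝ) * f i / f (i + 1))
      Filter.atTop (nhds α)) :
    Filter.Tendsto (fun i : ℕ => ((f (i + 1) - f i) / f (i + 1)) ^ i)
      Filter.atTop (nhds (Real.exp (-α))) := by
  set a : ℕ → ℝ := fun i => (i : ℝ) * f i / f (i + 1) with ha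
  set r : ℕ → ℝ := fun i => (f (i + 1) - f i) / f (i + 1) with hr
  -- basic facts
  have hfp : ∀ i, f (i+1) ≠ 0 := fun i => (hpos (i+1)).ne'
  have hreq : ∀ i, r i = 1 - f i / f (i+1) := by
    intro i
    simp only [hr, sub_div, div_self (hfp i)]
  have hdivq : ∀ᶠ i : ℕ in atTop, f i / f (i+1) = a i / i := by
    filter_upwards [eventually_gt_atTop 0] with i hi
    have : (i : ℝ) ≠ 0 := Nat.cast_ne_zero.mpr hi.ne'
    simp only [ha]
    rw [mul_div_assoc, mul_div_cancel_left₀ _ this]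
  have h0 : Tendsto (fun i : ℕ => a i / i) atTop (nhds 0) :=
    hlim.div_atTop tendsto_natCast_atTop_atTop
  have hq0 : Tendsto (fun i : ℕ => f i / f (i+1)) atTop (nhds 0) :=
    h0.congr' (hdivq.mono fun i h => h.symm)
  -- r tends to 1
  have hr1 : Tendsto r atTop (nhds 1) := by
    have : Tendsto (fun i : ℕ => 1 - f i / f (i+1)) atTop (nhds (1 - 0)) :=
      tendsto_const_nhds.sub hq0
    rw [sub_zero] at this
    exact this.congr fun i => (hreq i).symm
  have hrne : ∀ i, r i ≠ 1 := by
    intro i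
    rw [hreq i]
    have := div_pos (hpos i) (hpos (i+1))
    intro h
    nlinarith
  have hr1' : Tendsto r atTop (𝓝[≠] 1) :=
    tendsto_nhdsWithin_of_tendsto_nhds_of_eventually_within _ hr1
      (Eventually.of_forall fun i => hrne i)
  -- slope of log at 1
  have hslope : Tendsto (fun y : ℝ => Real.log y / (y - 1)) (𝓝[≠] (1:ℝ)) (nhds 1) := by
    have h := (Real.hasDerivAt_log one_ne_zero)
    have h2 := hasDerivAt_iff_tendsto_slope.mp h
    simp only [inv_one] at h2
    refine h2.congr fun y => ?_
    rw [slope_def_field, Real.log_one, sub_zero]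
  have hL : Tendsto (fun i => Real.log (r i) / (r i - 1)) atTop (nhds 1) :=
    hslope.comp hr1'
  -- i * log (r i) → -α
  have hmul : Tendsto (fun i : ℕ => (i : ℝ) * Real.log (r i)) atTop (nhds (-α)) := by
    have h1 : Tendsto (fun i : ℕ => (Real.log (r i) / (r i - 1)) * (-(a i)))
        atTop (nhds (1 * (-α))) := hL.mul hlim.neg
    rw [one_mul] at h1
    refine h1.congr' ?_
    filter_upwards [hdivq, eventually_gt_atTop 0] with i hq hi
    have hiz : (i : ℝ) ≠ 0 := Nat.cast_ne_zero.mpr hi.ne'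
    have hsub : r i - 1 = -(a i / i) := by rw [hreq i, hq]; ring
    have hane : a i ≠ 0 := by
      have : 0 < a i := by
        apply div_pos _ (hpos (i+1))
        exact mul_pos (by exact_mod_cast hi) (hpos i)
      exact this.ne'
    rw [hsub]
    field_simp
  have hexp : Tendsto (fun i : ℕ => Real.exp ((i : ℝ) * Real.log (r i)))
      atTop (nhds (Real.exp (-α))) := (Real.continuous_exp.tendsto _).comp hmul
  refine hexp.congr' ?_
  have hposr : ∀ᶠ i : ℕ in atTop, 0 < r i :=
    hr1.eventually (eventually_gt_nhds one_pos)
  filter_upwards [hposr] with i hri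
  rw [Real.exp_nat_mul, Real.exp_log hri]
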